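/- Assume the complex variety V_KKT is a finite set and I_KKT is a radical ideal (I_KKT = √I_KKT). If f, regarded as an element of ℝ[x, λ, ν], is nonnegative at every point of V^ℝ_KKT ∩ H, then f belongs to the linear cone M_KKT. -/

import Mathlib

open MvPolynomial Filter

noncomputable section

/-- Variables `x_1,…,x_n, λ_1,…,λ_s, ν_1,…,ν_t`. -/
abbrev KVar (n s t : ℕ) := Sum (Fin n) (Sum (Fin s) (Fin t))

/-- The polynomial ring `ℝ[x,λ,ν]`. -/
abbrev KPoly (n s t : ℕ) := MvPolynomial (KVar n s t) ℝ

/-- Lift a polynomial in `ℝ[x]` to `ℝ[x,λ,ν]`. -/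
def liftX (n s t : ℕ) (p : MvPolynomial (Fin n) ℝ) : KPoly n s t :=
  rename Sum.inl p

/-- The variable `λ_i`. -/
def lamX (n s t : ℕ) (i : Fin s) : KPoly n s t := X (Sum.inr (Sum.inl i))

/-- The variable `ν_j`. -/
def nuX (n s t : ℕ) (j : Fin t) : KPoly n s t := X (Sum.inr (Sum.inr j))

/-- `F_k = ∂f/∂x_k + Σ_i λ_i ∂g_i/∂x_k − Σ_j ν_j ∂h_j/∂x_k`. -/
def FF (n s t : ℕ) (f : MvPolynomial (Fin n) ℝ) (g : Fin s → MvPolynomial (Fin n) ℝ)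
    (h : Fin t → MvPolynomial (Fin n) ℝ) (k : Fin n) : KPoly n s t :=
  liftX n s t (pderiv k f)
    + ∑ i, lamX n s t i * liftX n s t (pderiv k (g i))
    - ∑ j, nuX n s t j * liftX n s t (pderiv k (h j))

/-- The KKT ideal `I_KKT = ⟨F_1,…,F_n, g_1,…,g_s, ν_1h_1,…,ν_th_t⟩ ⊆ ℝ[x,λ,ν]`. -/
def IKKT (n s t : ℕ) (f : MvPolynomial (Fin n) ℝ) (g : Fin s → MvPolynomial (Fin n) ℝ)
    (h : Fin t → MvPolynomial (Fin n) ℝ) : Ideal (KPoly n s t) :=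
  Ideal.span (Set.range (FF n s t f g h) ∪ Set.range (fun i => liftX n s t (g i))
    ∪ Set.range (fun j => nuX n s t j * liftX n s t (h j)))

/-- The real variety `V^ℝ_KKT` of the KKT ideal. -/
def VRKKT (n s t : ℕ) (f : MvPolynomial (Fin n) ℝ) (g : Fin s → MvPolynomial (Fin n) ℝ)
    (h : Fin t → MvPolynomial (Fin n) ℝ) : Set (KVar n s t → ℝ) :=
  {z | ∀ p ∈ IKKT n s t f g h, eval z p = 0}

/-- The set `H = {(x,λ,ν) : h_j(x) ≥ 0 for all j}`. -/
def HSet (n s t : ℕ) (h : Fin t → MvPolynomial (Fin n) ℝ) : Set (KVar n s t → ℝ) :=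
  {z | ∀ j, 0 ≤ eval z (liftX n s t (h j))}

/-- A real polynomial is SOS if it is a finite sum of squares of real polynomials. -/
def IsSOS {σ : Type*} (p : MvPolynomial σ ℝ) : Prop :=
  ∃ (m : ℕ) (q : Fin m → MvPolynomial σ ℝ), p = ∑ i, (q i) ^ 2

/-- The linear cone `M_KKT = {σ_0 + Σ_j σ_j h_j : σ_i SOS} + I_KKT`. -/
def MKKT (n s t : ℕ) (f : MvPolynomial (Fin n) ℝ) (g : Fin s → MvPolynomial (Fin n) ℝ)
    (h : Fin t → MvPolynomial (Fin n) ℝ) : Set (KPoly n s t) :=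
  {p | ∃ (σ0 : KPoly n s t) (σ : Fin t → KPoly n s t),
    IsSOS σ0 ∧ (∀ j, IsSOS (σ j)) ∧
    ∃ q ∈ IKKT n s t f g h,
      p = σ0 + (∑ j, σ j * liftX n s t (h j)) + q}

namespace Stmt1Aux

variable {σ : Type*}

/-- Real part of a complex polynomial, coefficientwise. -/
def reP (q : MvPolynomial σ ℂ) : MvPolynomial σ ℝ :=
  AddMonoidAlgebra.ofCoeff (Finsupp.mapRange Complex.re Complex.zero_re (AddMonoidAlgebra.coeff q))

lemma coeff_reP (m : σ →₀ ℕ) (q : MvPolynomial σ ℂ) : coeff m (reP q) = (coeff m q).re := rfl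

lemma reP_map (p : MvPolynomial σ ℝ) : reP (map (algebraMap ℝ ℂ) p) = p := by
  ext m; rw [coeff_reP, coeff_map]; simp

lemma reP_mul_map (a : MvPolynomial σ ℂ) (b : MvPolynomial σ ℝ) :
    reP (a * map (algebraMap ℝ ℂ) b) = reP a * b := by
  classical
  ext m
  rw [coeff_reP, coeff_mul, coeff_mul, Complex.re_sum]
  refine Finset.sum_congr rfl fun p _ => ?_
  rw [coeff_map, coeff_reP]
  simp [Complex.mul_re]

lemma mem_of_map_mem {I : Ideal (MvPolynomial σ ℝ)} {p : MvPolynomial σ ℝ}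
    (hp : map (algebraMap ℝ ℂ) p ∈ I.map (MvPolynomial.map (algebraMap ℝ ℂ) :
      MvPolynomial σ ℝ →+* MvPolynomial σ ℂ)) : p ∈ I := by
  have key : ∀ q ∈ I.map (MvPolynomial.map (algebraMap ℝ ℂ) :
      MvPolynomial σ ℝ →+* MvPolynomial σ ℂ), ∀ a : MvPolynomial σ ℂ, reP (a * q) ∈ I := by
    intro q hq
    have hq' : q ∈ Ideal.span ((MvPolynomial.map (algebraMap ℝ ℂ) :
        MvPolynomial σ ℝ →+* MvPolynomial σ ℂ) '' I) := hq
    refine Submodule.span_induction ?_ ?_ ?_ ?_ hq'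
    · rintro x ⟨b, hb, rfl⟩ a
      rw [reP_mul_map]
      exact I.mul_mem_left _ hb
    · intro a; rw [mul_zero]
      have : reP (0 : MvPolynomial σ ℂ) = 0 := by ext m; rw [coeff_reP]; simp
      rw [this]; exact I.zero_mem
    · intro x y _ _ hx hy a
      have : reP (a * (x + y)) = reP (a * x) + reP (a * y) := by
        ext m
        rw [coeff_reP, mul_add, coeff_add, Complex.add_re, coeff_add, coeff_reP, coeff_reP]
      rw [this]; exact I.add_mem (hx a) (hy a)
    · intro c x _ hx a
      have : a * (c • x) = (a * c) * x := by rw [smul_eq_mul]; ring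
      rw [this]; exact hx (a * c)
  have := key _ hp 1
  rwa [one_mul, reP_map] at this

/-- Interpolation: a complex polynomial achieving arbitrary values on a finite set. -/
lemma exists_interp (S : Finset (σ → ℂ)) (v : (σ → ℂ) → ℂ) :
    ∃ P : MvPolynomial σ ℂ, ∀ u ∈ S, eval u P = v u := by
  classical
  have sep : ∀ u w : σ → ℂ, ∃ e : MvPolynomial σ ℂ,
      eval u e = 1 ∧ (u ≠ w → eval w e = 0) := by
    intro u w
    by_cases huw : u = w
    · exact ⟨1, by simp, fun hc => absurd huw hc⟩
    · have hk : ∃ k, u k ≠ w k := by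
        by_contra hc; push_neg at hc; exact huw (funext hc)
      obtain ⟨k, hk⟩ := hk
      refine ⟨C (u k - w k)⁻¹ * (X k - C (w k)), ?_, fun _ => ?_⟩
      · simp [inv_mul_cancel₀ (sub_ne_zero.mpr hk)]
      · simp
  choose e he1 he0 using sep
  refine ⟨∑ u ∈ S, C (v u) * ∏ w ∈ S.erase u, e u w, fun u hu => ?_⟩
  rw [map_sum]
  have : ∀ u' ∈ S, eval u (C (v u') * ∏ w ∈ S.erase u', e u' w)
      = if u' = u then v u else 0 := by
    intro u' _
    by_cases huu : u' = u
    · subst huu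
      rw [if_pos rfl, map_mul, map_prod, eval_C]
      have : ∀ w ∈ S.erase u', eval u' (e u' w) = 1 := fun w _ => he1 u' w
      rw [Finset.prod_congr rfl this]
      simp
    · rw [if_neg huu, map_mul, map_prod]
      have hz : eval u (e u' u) = 0 := he0 u' u huu
      rw [Finset.prod_eq_zero (Finset.mem_erase.mpr ⟨fun hc => huu hc.symm, hu⟩) hz, mul_zero]
  rw [Finset.sum_congr rfl this, Finset.sum_ite_eq' S u (fun _ => v u), if_pos hu]

/-- Coordinatewise conjugate of a point. -/
def zconj (z : σ → ℂ) : σ → ℂ := fun k => (starRingEnd ℂ) (z k)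

lemma eval_map_conj (e : MvPolynomial σ ℂ) (z : σ → ℂ) :
    eval z (map (starRingEnd ℂ) e) = (starRingEnd ℂ) (eval (zconj z) e) := by
  rw [eval_map]
  have h1 : eval (zconj z) e = eval₂ (RingHom.id ℂ) (zconj z) e := rfl
  rw [h1, eval₂_comp_left (starRingEnd ℂ) (RingHom.id ℂ) (zconj z) e]
  congr 1
  funext k; simp [zconj]

lemma eval_zconj_map (p : MvPolynomial σ ℝ) (z : σ → ℂ) :
    eval (zconj z) (map (algebraMap ℝ ℂ) p)
      = (starRingEnd ℂ) (eval z (map (algebraMap ℝ ℂ) p)) := by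
  rw [eval_map, eval_map]
  have h1 : (starRingEnd ℂ) (eval₂ (algebraMap ℝ ℂ) z p)
      = eval₂ ((starRingEnd ℂ).comp (algebraMap ℝ ℂ)) ((starRingEnd ℂ) ∘ z) p :=
    eval₂_comp_left _ _ _ _
  rw [h1]
  congr 1
  ext r
  simp

lemma eval_real_point (z : σ → ℂ) (hz : ∀ k, (z k).im = 0) (q : MvPolynomial σ ℝ) :
    eval z (map (algebraMap ℝ ℂ) q) = algebraMap ℝ ℂ (eval (fun k => (z k).re) q) := by
  rw [eval_map]
  have h1 : algebraMap ℝ ℂ (eval (fun k => (z k).re) q)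
      = eval₂ ((algebraMap ℝ ℂ).comp (RingHom.id ℝ)) ((algebraMap ℝ ℂ) ∘ fun k => (z k).re) q :=
    eval₂_comp_left _ _ _ _
  rw [h1, RingHom.comp_id]
  congr 1
  funext k
  have : z k = Complex.ofReal ((z k).re) := by
    apply Complex.ext <;> simp [hz k]
  exact this

lemma zconj_eq_self {z : σ → ℂ} (hz : ∀ k, (z k).im = 0) : zconj z = z := by
  funext k
  apply Complex.ext <;> simp [zconj, hz k]

lemma zconj_ne_self {z : σ → ℂ} (hz : ¬ (∀ k, (z k).im = 0)) : zconj z ≠ z := by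
  intro hc
  apply hz
  intro k
  have := congrFun hc k
  have him := congrArg Complex.im this
  simp [zconj] at him
  linarith

/-- Real polynomial whose complexification is `e + conj e`. -/
def realify (e : MvPolynomial σ ℂ) : MvPolynomial σ ℝ :=
  reP (e + map (starRingEnd ℂ) e)

lemma map_realify (e : MvPolynomial σ ℂ) :
    map (algebraMap ℝ ℂ) (realify e) = e + map (starRingEnd ℂ) e := by
  ext m
  rw [coeff_map, realify, coeff_reP]
  have hconj : (starRingEnd ℂ) (coeff m (e + map (starRingEnd ℂ) e))
      = coeff m (e + map (starRingEnd ℂ) e) := by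
    simp [coeff_add, coeff_map, add_comm]
  have := Complex.conj_eq_iff_re.mp hconj
  simpa using this

lemma eval_realify (e : MvPolynomial σ ℂ) (z : σ → ℂ) :
    eval z (map (algebraMap ℝ ℂ) (realify e))
      = eval z e + (starRingEnd ℂ) (eval (zconj z) e) := by
  rw [map_realify, map_add, eval_map_conj]

lemma isSOS_add {p q : MvPolynomial σ ℝ} (hp : IsSOS p) (hq : IsSOS q) : IsSOS (p + q) := by
  obtain ⟨m, a, rfl⟩ := hp
  obtain ⟨m', b, rfl⟩ := hq
  refine ⟨m + m', Fin.append a b, ?_⟩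
  rw [Fin.sum_univ_add]
  congr 1 <;> refine Finset.sum_congr rfl fun i _ => ?_ <;> simp

lemma isSOS_sum {α : Type*} (s : Finset α) (q : α → MvPolynomial σ ℝ) :
    IsSOS (∑ u ∈ s, (q u) ^ 2) := by
  classical
  induction s using Finset.cons_induction with
  | empty => exact ⟨0, fun i => 0, by simp⟩
  | cons a s ha ih =>
      rw [Finset.sum_cons]
      exact isSOS_add ⟨1, fun _ => q a, by simp⟩ ih

/-- A complex square root. -/
def csq (z : ℂ) : ℂ := (IsAlgClosed.exists_pow_nat_eq z two_pos).choose

lemma csq_sq (z : ℂ) : (csq z) ^ 2 = z := (IsAlgClosed.exists_pow_nat_eq z two_pos).choose_spec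

lemma main_construction (t : ℕ) (fp : MvPolynomial σ ℝ) (hp : Fin t → MvPolynomial σ ℝ)
    (S : Finset (σ → ℂ))
    (hconjS : ∀ z ∈ S, zconj z ∈ S)
    (hneg : ∀ z ∈ S, (∀ k, (z k).im = 0) → eval (fun k => (z k).re) fp < 0 →
      ∃ j, eval (fun k => (z k).re) (hp j) < 0) :
    ∃ (s0 : MvPolynomial σ ℝ) (ss : Fin t → MvPolynomial σ ℝ),
      IsSOS s0 ∧ (∀ j, IsSOS (ss j)) ∧
      ∀ z ∈ S, eval z (map (algebraMap ℝ ℂ) (fp - (s0 + ∑ j, ss j * hp j))) = 0 := by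
  classical
  set fv : (σ → ℂ) → ℝ := fun z => eval (fun k => (z k).re) fp with hfv
  set hv : (σ → ℂ) → Fin t → ℝ := fun z j => eval (fun k => (z k).re) (hp j) with hhv
  set c : (σ → ℂ) → ℂ := fun z =>
    if ∀ k, (z k).im = 0 then
      if fv z < 0 then
        if hj : ∃ j, hv z j < 0 then
          ((Real.sqrt (fv z / hv z hj.choose) / 2 : ℝ) : ℂ)
        else 0
      else ((Real.sqrt (fv z) / 2 : ℝ) : ℂ)
    else csq (eval z (map (algebraMap ℝ ℂ) fp) / 2) with hc
  set r : (σ → ℂ) → MvPolynomial σ ℝ := fun u =>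
    realify (exists_interp S (fun w => if w = u then c u else 0)).choose with hr
  have hrval : ∀ (u : σ → ℂ), ∀ z ∈ S, eval z (map (algebraMap ℝ ℂ) (r u))
      = (if z = u then c u else 0) + (starRingEnd ℂ) (if zconj z = u then c u else 0) := by
    intro u z hz
    rw [hr, eval_realify,
        (exists_interp S _).choose_spec z hz,
        (exists_interp S _).choose_spec (zconj z) (hconjS z hz)]
  set A : (σ → ℂ) → Prop := fun u => ¬ ((∀ k, (u k).im = 0) ∧ fv u < 0) with hA
  set B : Fin t → (σ → ℂ) → Prop := fun j u =>
    (∀ k, (u k).im = 0) ∧ fv u < 0 ∧ ∃ hj : (∃ j', hv u j' < 0), hj.choose = j with hB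
  refine ⟨∑ u ∈ S.filter A, (r u) ^ 2,
    fun j => ∑ u ∈ S.filter (B j), (r u) ^ 2,
    isSOS_sum _ _, fun j => isSOS_sum _ _, ?_⟩
  intro z hz
  simp only [map_sub, map_add, map_sum, map_mul, map_pow]
  -- notation for the evaluation of r u at z
  set G : (σ → ℂ) → ℂ := fun u =>
    (if z = u then c u else 0) + (starRingEnd ℂ) (if zconj z = u then c u else 0) with hG
  have hrw : ∀ (T : Finset (σ → ℂ)), T ⊆ S →
      ∑ u ∈ T, (eval z (map (algebraMap ℝ ℂ) (r u))) ^ 2 = ∑ u ∈ T, (G u) ^ 2 := by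
    intro T _
    exact Finset.sum_congr rfl fun u _ => by rw [hrval u z hz]
  rw [hrw _ (Finset.filter_subset _ _)]
  have hrwj : ∀ j : Fin t,
      ∑ u ∈ S.filter (B j), (eval z (map (algebraMap ℝ ℂ) (r u))) ^ 2
        = ∑ u ∈ S.filter (B j), (G u) ^ 2 :=
    fun j => hrw _ (Finset.filter_subset _ _)
  simp only [hrwj]
  by_cases hre : ∀ k, (z k).im = 0
  · -- real point
    have hcz : zconj z = z := zconj_eq_self hre
    have hGu : ∀ u : σ → ℂ, (G u) ^ 2
        = if u = z then (c z + (starRingEnd ℂ) (c z)) ^ 2 else 0 := by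
      intro u
      by_cases hu : u = z
      · subst hu
        rw [if_pos rfl, hG]
        simp [hcz]
      · rw [if_neg hu, hG]
        simp only [hcz]
        rw [if_neg (fun hcon => hu hcon.symm)]
        simp
    have hsum : ∀ (T : Finset (σ → ℂ)),
        ∑ u ∈ T, (G u) ^ 2
          = if z ∈ T then (c z + (starRingEnd ℂ) (c z)) ^ 2 else 0 := by
      intro T
      rw [Finset.sum_congr rfl fun u _ => hGu u]
      exact Finset.sum_ite_eq' T z (fun _ => (c z + (starRingEnd ℂ) (c z)) ^ 2)
    simp only [hsum]
    have hEvf : eval z (map (algebraMap ℝ ℂ) fp) = ((fv z : ℝ) : ℂ) :=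
      eval_real_point z hre fp
    by_cases hfneg : fv z < 0
    · -- bad real point: use the h_j multiplier
      have hzA : z ∉ S.filter A := by
        intro hcon
        rw [Finset.mem_filter] at hcon
        exact hcon.2 ⟨hre, hfneg⟩
      have hex : ∃ j', hv z j' < 0 := hneg z hz hre hfneg
      have hcval : c z = ((Real.sqrt (fv z / hv z hex.choose) / 2 : ℝ) : ℂ) := by
        rw [hc]
        simp only [if_pos hre, if_pos hfneg, dif_pos hex]
      have hBz : ∀ j : Fin t, z ∈ S.filter (B j) ↔ j = hex.choose := by
        intro j
        simp only [Finset.mem_filter, hB]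
        constructor
        · rintro ⟨-, -, -, hj, rfl⟩
          exact (congrArg Exists.choose (Subsingleton.elim hex hj)).symm ▸ rfl
        · rintro rfl
          exact ⟨hz, hre, hfneg, hex, rfl⟩
      rw [if_neg hzA]
      have hterm : ∀ j : Fin t,
          (if z ∈ S.filter (B j) then (c z + (starRingEnd ℂ) (c z)) ^ 2 else 0)
            * eval z (map (algebraMap ℝ ℂ) (hp j))
          = if j = hex.choose then (c z + (starRingEnd ℂ) (c z)) ^ 2
              * eval z (map (algebraMap ℝ ℂ) (hp j)) else 0 := by
        intro j
        by_cases hj : j = hex.choose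
        · rw [if_pos ((hBz j).mpr hj), if_pos hj]
        · rw [if_neg (fun hcon => hj ((hBz j).mp hcon)), if_neg hj, zero_mul]
      rw [Finset.sum_congr rfl fun j _ => hterm j,
        Finset.sum_ite_eq' Finset.univ hex.choose
          (fun j => (c z + (starRingEnd ℂ) (c z)) ^ 2 * eval z (map (algebraMap ℝ ℂ) (hp j))),
        if_pos (Finset.mem_univ _)]
      have hEvh : eval z (map (algebraMap ℝ ℂ) (hp hex.choose))
          = ((hv z hex.choose : ℝ) : ℂ) := eval_real_point z hre _
      have hD : (c z + (starRingEnd ℂ) (c z)) ^ 2 = ((fv z / hv z hex.choose : ℝ) : ℂ) := by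
        rw [hcval, Complex.conj_ofReal, ← Complex.ofReal_add, ← Complex.ofReal_pow]
        congr 1
        have h2 : Real.sqrt (fv z / hv z hex.choose) / 2
            + Real.sqrt (fv z / hv z hex.choose) / 2 = Real.sqrt (fv z / hv z hex.choose) := by
          ring
        rw [h2, Real.sq_sqrt]
        exact le_of_lt (div_pos_of_neg_of_neg hfneg hex.choose_spec)
      rw [hD, hEvf, hEvh, zero_add, ← Complex.ofReal_mul,
        div_mul_cancel₀ _ (ne_of_lt hex.choose_spec), sub_self]
    · -- good real point: covered by σ₀
      have hzA : z ∈ S.filter A := by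
        simp only [Finset.mem_filter, hA]
        exact ⟨hz, fun hcon => hfneg hcon.2⟩
      have hzB : ∀ j : Fin t, z ∉ S.filter (B j) := by
        intro j hcon
        rw [Finset.mem_filter, hB] at hcon
        exact hfneg hcon.2.2.1
      have hcval : c z = ((Real.sqrt (fv z) / 2 : ℝ) : ℂ) := by
        rw [hc]
        simp only [if_pos hre, if_neg hfneg]
      have hD : (c z + (starRingEnd ℂ) (c z)) ^ 2 = ((fv z : ℝ) : ℂ) := by
        rw [hcval, Complex.conj_ofReal, ← Complex.ofReal_add, ← Complex.ofReal_pow]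
        congr 1
        have h2 : Real.sqrt (fv z) / 2 + Real.sqrt (fv z) / 2 = Real.sqrt (fv z) := by ring
        rw [h2, Real.sq_sqrt (not_lt.mp hfneg)]
      rw [if_pos hzA, hD, hEvf]
      simp only [if_neg (hzB _), zero_mul, Finset.sum_const_zero, add_zero, sub_self]
  · -- non-real point
    have hczne : zconj z ≠ z := zconj_ne_self hre
    have hnre' : ¬ ∀ k, ((zconj z) k).im = 0 := by
      intro hcon
      apply hre
      intro k
      have := hcon k
      simp only [zconj, Complex.conj_im] at this
      linarith
    have hGu : ∀ u : σ → ℂ, (G u) ^ 2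
        = (if u = z then (c z) ^ 2 else 0)
          + (if u = zconj z then ((starRingEnd ℂ) (c u)) ^ 2 else 0) := by
      intro u
      have hGu' : G u = (if z = u then c u else 0)
          + (starRingEnd ℂ) (if zconj z = u then c u else 0) := rfl
      by_cases h1 : u = z
      · rw [hGu', h1, if_pos rfl, if_neg hczne, if_pos rfl,
          if_neg (show ¬ z = zconj z from fun hcon => hczne hcon.symm)]
        simp
      · by_cases h2 : u = zconj z
        · rw [hGu', h2, if_neg (show ¬ z = zconj z from fun hcon => hczne hcon.symm),
            if_pos rfl, if_neg hczne, if_pos rfl]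
          simp
        · rw [hGu', if_neg (fun hcon => h1 hcon.symm), if_neg (fun hcon => h2 hcon.symm),
            if_neg h1, if_neg h2]
          simp
    have hs0 : ∑ u ∈ S.filter A, (G u) ^ 2
        = eval z (map (algebraMap ℝ ℂ) fp) / 2 + eval z (map (algebraMap ℝ ℂ) fp) / 2 := by
      rw [Finset.sum_congr rfl fun u _ => hGu u, Finset.sum_add_distrib,
        Finset.sum_ite_eq' _ z (fun _ => (c z) ^ 2),
        Finset.sum_ite_eq' _ (zconj z) (fun u => ((starRingEnd ℂ) (c u)) ^ 2)]
      have hzA : z ∈ S.filter A := by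
        simp only [Finset.mem_filter, hA]
        exact ⟨hz, fun hcon => hre hcon.1⟩
      have hzcA : zconj z ∈ S.filter A := by
        simp only [Finset.mem_filter, hA]
        exact ⟨hconjS z hz, fun hcon => hnre' hcon.1⟩
      rw [if_pos hzA, if_pos hzcA]
      have hc1 : (c z) ^ 2 = eval z (map (algebraMap ℝ ℂ) fp) / 2 := by
        rw [hc]
        simp only [if_neg hre]
        exact csq_sq _
      have hc2 : ((starRingEnd ℂ) (c (zconj z))) ^ 2
          = eval z (map (algebraMap ℝ ℂ) fp) / 2 := by
        have : (c (zconj z)) ^ 2 = eval (zconj z) (map (algebraMap ℝ ℂ) fp) / 2 := by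
          rw [hc]
          simp only [if_neg hnre']
          exact csq_sq _
        calc ((starRingEnd ℂ) (c (zconj z))) ^ 2
            = (starRingEnd ℂ) ((c (zconj z)) ^ 2) := by rw [map_pow]
          _ = (starRingEnd ℂ) (eval (zconj z) (map (algebraMap ℝ ℂ) fp) / 2) := by rw [this]
          _ = eval z (map (algebraMap ℝ ℂ) fp) / 2 := by
              rw [eval_zconj_map, map_div₀, Complex.conj_conj]
              congr 1
              exact map_ofNat (starRingEnd ℂ) 2
      rw [hc1, hc2]
    have hsj : ∀ j : Fin t, ∑ u ∈ S.filter (B j), (G u) ^ 2 = 0 := by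
      intro j
      refine Finset.sum_eq_zero fun u hu => ?_
      rw [Finset.mem_filter, hB] at hu
      have hureal : ∀ k, (u k).im = 0 := hu.2.1
      have hu1 : u ≠ z := fun hcon => hre (hcon ▸ hureal)
      have hu2 : u ≠ zconj z := by
        intro hcon
        apply hre
        intro k
        have := congrArg (fun w => (w k).im) hcon
        simp only [zconj, Complex.conj_im, hureal k] at this
        linarith
      rw [hGu u, if_neg hu1, if_neg hu2, add_zero]
    rw [hs0]
    simp only [hsj, zero_mul, Finset.sum_const_zero, add_zero]
    ring

end Stmt1Aux

/-- If the complex variety `V_KKT` is finite and `I_KKT` is radical, and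
`f` is nonnegative on `V^ℝ_KKT ∩ H`, then `f ∈ M_KKT`. -/
theorem stmt1 (n s t : ℕ) (f : MvPolynomial (Fin n) ℝ) (g : Fin s → MvPolynomial (Fin n) ℝ)
    (h : Fin t → MvPolynomial (Fin n) ℝ)
    (hfin : {z : KVar n s t → ℂ | ∀ p ∈ IKKT n s t f g h, aeval z p = 0}.Finite)
    (hrad : (IKKT n s t f g h).radical = IKKT n s t f g h)
    (hnonneg : ∀ z ∈ VRKKT n s t f g h ∩ HSet n s t h, 0 ≤ eval z (liftX n s t f)) :
    liftX n s t f ∈ MKKT n s t f g h := by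
  classical
  set S : Finset (KVar n s t → ℂ) := hfin.toFinset with hS
  have hmemS : ∀ z, z ∈ S ↔ ∀ p ∈ IKKT n s t f g h, aeval z p = 0 := by
    intro z
    rw [hS, Set.Finite.mem_toFinset]
    rfl
  have haev : ∀ (z : KVar n s t → ℂ) (p : KPoly n s t),
      aeval z p = eval z (map (algebraMap ℝ ℂ) p) := by
    intro z p
    rw [aeval_def, eval₂_eq_eval_map]
  have hconjS : ∀ z ∈ S, Stmt1Aux.zconj z ∈ S := by
    intro z hz
    rw [hmemS] at hz ⊢
    intro p hp
    rw [haev, Stmt1Aux.eval_zconj_map, ← haev, hz p hp, map_zero]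
  have hneg : ∀ z ∈ S, (∀ k, (z k).im = 0) →
      eval (fun k => (z k).re) (liftX n s t f) < 0 →
      ∃ j, eval (fun k => (z k).re) (liftX n s t (h j)) < 0 := by
    intro z hz hre hneg0
    by_contra hcon
    push_neg at hcon
    have hVR : (fun k => (z k).re) ∈ VRKKT n s t f g h := by
      intro p hp
      have h0 := (hmemS z).mp hz p hp
      rw [haev, Stmt1Aux.eval_real_point z hre] at h0
      have := (map_eq_zero_iff (algebraMap ℝ ℂ) (algebraMap ℝ ℂ).injective).mp h0
      exact this
    have hH : (fun k => (z k).re) ∈ HSet n s t h := fun j => hcon j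
    exact absurd (hnonneg _ ⟨hVR, hH⟩) (not_le.mpr hneg0)
  obtain ⟨s0, ss, hs0, hss, hvanish⟩ :=
    Stmt1Aux.main_construction t (liftX n s t f) (fun j => liftX n s t (h j)) S hconjS hneg
  set P : KPoly n s t := liftX n s t f - (s0 + ∑ j, ss j * liftX n s t (h j)) with hP
  set J : Ideal (MvPolynomial (KVar n s t) ℂ) :=
    (IKKT n s t f g h).map (MvPolynomial.map (algebraMap ℝ ℂ) :
      KPoly n s t →+* MvPolynomial (KVar n s t) ℂ) with hJ
  have hZL : MvPolynomial.zeroLocus ℂ J = {z | ∀ p ∈ IKKT n s t f g h, aeval z p = 0} := by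
    ext z
    rw [MvPolynomial.mem_zeroLocus_iff]
    constructor
    · intro hz p hp
      rw [haev]
      exact hz _ (Ideal.mem_map_of_mem _ hp)
    · intro hz q hq
      have hker : J ≤ RingHom.ker (eval z : MvPolynomial (KVar n s t) ℂ →+* ℂ) := by
        rw [hJ]
        refine Ideal.map_le_iff_le_comap.mpr fun p hp => ?_
        rw [Ideal.mem_comap, RingHom.mem_ker, ← haev]
        exact hz p hp
      exact hker hq
  have hvan : map (algebraMap ℝ ℂ) P ∈ J.radical := by
    rw [← MvPolynomial.vanishingIdeal_zeroLocus_eq_radical (K := ℂ), MvPolynomial.mem_vanishingIdeal_iff]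
    intro z hz
    rw [hZL] at hz
    exact hvanish z ((hmemS z).mpr hz)
  obtain ⟨m, hm⟩ := Ideal.mem_radical_iff.mp hvan
  have hPm : P ^ m ∈ IKKT n s t f g h := Stmt1Aux.mem_of_map_mem (by rw [map_pow]; exact hm)
  have hPI : P ∈ IKKT n s t f g h := by
    rw [← hrad]
    exact Ideal.mem_radical_iff.mpr ⟨m, hPm⟩
  exact ⟨s0, ss, hs0, hss, P, hPI, by rw [hP]; ring⟩

end
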